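/- Let m ≥ 1 and k ≥ 1, and set n = m(m−1)/2 + k. Then the number γ_{n,m} of compositions of n having mex m satisfies, as an equality of rational numbers, γ_{n,m} = Σ (m − 1 + α_1 + ⋯ + α_k)! / ∏_{i=1}^{k} d_i, where the sum ranges over all tuples (α_1, ..., α_k) of nonnegative integers with α_1 + 2α_2 + ⋯ + kα_k = k and with α_m = 0 (this last condition applying only when m ≤ k), and where d_i = (α_i + 1)! if i ≤ m − 1, d_i = 1 if i = m, and d_i = α_i! if i ≥ m + 1. -/

import Mathlib

/-- The mex of a composition: the smallest positive integer that is not a part. -/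
noncomputable def Composition.mex {n : ℕ} (c : Composition n) : ℕ :=
  sInf {k : ℕ | 0 < k ∧ k ∉ c.blocks}

open Finset

/-- Finset of all lists whose multiset of entries is `s`. -/
noncomputable def permsOf (s : Multiset ℕ) : Finset (List ℕ) := s.toList.permutations.toFinset

lemma mem_permsOf {s : Multiset ℕ} {l : List ℕ} : l ∈ permsOf s ↔ (l : Multiset ℕ) = s := by
  simp [permsOf, List.mem_permutations, ← Multiset.coe_eq_coe]

lemma permsOf_recursion (s : Multiset ℕ) (hs : s ≠ 0) :
    permsOf s = s.toFinset.biUnion (fun a => (permsOf (s.erase a)).image (a :: ·)) := by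
  ext l
  simp only [mem_permsOf, Finset.mem_biUnion, Finset.mem_image, Multiset.mem_toFinset]
  constructor
  · rintro rfl
    cases l with
    | nil => simp at hs
    | cons a t =>
      exact ⟨a, by simp, t, by simp [mem_permsOf, Multiset.cons_coe]⟩
  · rintro ⟨a, ha, t, ht, rfl⟩
    rw [← Multiset.cons_coe, ht, Multiset.cons_erase ha]

lemma card_permsOf_mul (s : Multiset ℕ) :
    (∏ a ∈ s.toFinset, (s.count a).factorial) * (permsOf s).card
      = (Multiset.card s).factorial := by
  induction s using Multiset.strongInductionOn with
  | ih s IH =>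
  rcases eq_or_ne s 0 with rfl | hs
  · simp [permsOf]
  · rw [permsOf_recursion s hs, Finset.card_biUnion (by
      intro a ha b hb hab
      simp only [Finset.disjoint_left, Finset.mem_image]
      rintro l ⟨t, _, rfl⟩ ⟨t', _, h⟩
      exact hab (by injection h with h1 _; exact h1.symm ▸ rfl))]
    have himg : ∀ a, ((permsOf (s.erase a)).image (a :: ·)).card
        = (permsOf (s.erase a)).card := fun a =>
      Finset.card_image_of_injective _ (fun x y h => by injection h)
    simp only [himg]
    rw [Finset.mul_sum]
    have key : ∀ a ∈ s.toFinset,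
        (∏ b ∈ s.toFinset, (s.count b).factorial) * (permsOf (s.erase a)).card
          = s.count a * (Multiset.card s - 1).factorial := by
      intro a ha
      rw [Multiset.mem_toFinset] at ha
      have hIH := IH (s.erase a) (Multiset.erase_lt.mpr ha)
      have hsub : (s.erase a).toFinset ⊆ s.toFinset := by
        intro b hb
        rw [Multiset.mem_toFinset] at hb ⊢
        exact Multiset.mem_of_mem_erase hb
      have hext : ∏ b ∈ (s.erase a).toFinset, ((s.erase a).count b).factorial
          = ∏ b ∈ s.toFinset, ((s.erase a).count b).factorial := by
        apply Finset.prod_subset hsub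
        intro b _ hb
        rw [Multiset.mem_toFinset, ← Multiset.count_pos, Nat.not_lt,
          Nat.le_zero] at hb
        simp [hb]
      have hpos : 0 < s.count a := Multiset.count_pos.mpr ha
      have hfac : ∏ b ∈ s.toFinset, (s.count b).factorial
          = s.count a * ∏ b ∈ s.toFinset, ((s.erase a).count b).factorial := by
        rw [← Finset.mul_prod_erase s.toFinset _ (Multiset.mem_toFinset.mpr ha),
          ← Finset.mul_prod_erase s.toFinset _ (Multiset.mem_toFinset.mpr ha),
          Multiset.count_erase_self, ← mul_assoc,
          Nat.mul_factorial_pred hpos.ne']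
        congr 1
        exact Finset.prod_congr rfl fun b hb => by
          rw [Multiset.count_erase_of_ne (Finset.ne_of_mem_erase hb)]
      rw [hfac, mul_assoc, ← hext, hIH, Multiset.card_erase_of_mem ha]
      rfl
    rw [Finset.sum_congr rfl key, ← Finset.sum_mul, Multiset.toFinset_sum_count_eq,
      Nat.mul_factorial_pred (by simpa [Multiset.card_pos] using hs)]

lemma exists_unused (l : List ℕ) : {k : ℕ | 0 < k ∧ k ∉ l}.Nonempty :=
  ⟨l.sum + 1, Nat.succ_pos _, fun hmem => by
    have := List.le_sum_of_mem hmem; omega⟩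

lemma mex_eq_iff {n : ℕ} (c : Composition n) {m : ℕ} (hm : 1 ≤ m) :
    c.mex = m ↔ m ∉ c.blocks ∧ ∀ j, 0 < j → j < m → j ∈ c.blocks := by
  have hne := exists_unused c.blocks
  constructor
  · intro h
    have hmem := Nat.sInf_mem hne
    rw [show sInf {k : ℕ | 0 < k ∧ k ∉ c.blocks} = c.mex from rfl, h] at hmem
    refine ⟨hmem.2, fun j hj hjm => ?_⟩
    by_contra hjl
    have := Nat.sInf_le (s := {k : ℕ | 0 < k ∧ k ∉ c.blocks}) ⟨hj, hjl⟩
    rw [show sInf {k : ℕ | 0 < k ∧ k ∉ c.blocks} = c.mex from rfl, h] at this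
    omega
  · rintro ⟨h1, h2⟩
    refine le_antisymm (Nat.sInf_le ⟨hm, h1⟩) (le_csInf hne fun b hb => ?_)
    by_contra hlt
    exact hb.2 (h2 b hb.1 (by omega))

section SOf

variable (m k : ℕ)

/-- The multiset `{1, 2, …, m−1}`. -/
noncomputable def mand : Multiset ℕ := (Multiset.range (m - 1)).map (· + 1)

lemma count_mand (j : ℕ) :
    Multiset.count j (mand m) = if 1 ≤ j ∧ j < m then 1 else 0 := by
  rcases Nat.eq_zero_or_pos j with rfl | hj
  · simp only [mand]
    rw [Multiset.count_eq_zero_of_notMem (by simp)]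
    simp
  · obtain ⟨j, rfl⟩ := Nat.exists_eq_add_of_le hj
    rw [show 1 + j = j + 1 by omega, mand]
    have h2 := Multiset.count_map_eq_count' (fun x => x + 1) (Multiset.range (m - 1))
      (fun a b h => by simpa using h) j
    refine h2.trans ?_
    have hnd : (Multiset.range (m - 1)).Nodup := Multiset.nodup_range _
    by_cases hlt : j < m - 1
    · rw [Multiset.count_eq_one_of_mem hnd (Multiset.mem_range.mpr hlt), if_pos (by omega)]
    · rw [Multiset.count_eq_zero.mpr (fun hc => hlt (Multiset.mem_range.mp hc)),
        if_neg (by omega)]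

lemma sum_mand : (mand m).sum = m.choose 2 := by
  have h0 : (mand m).sum = ∑ x ∈ Finset.range (m - 1), (x + 1) := rfl
  rw [h0, Nat.choose_two_right, ← Finset.sum_range_id]
  rcases Nat.eq_zero_or_pos m with rfl | hm
  · simp
  · obtain ⟨m, rfl⟩ := Nat.exists_eq_add_of_le hm
    rw [show 1 + m - 1 = m by omega, show 1 + m = m + 1 by omega,
      Finset.sum_range_succ' (fun i => i) m]
    simp

lemma card_mand : Multiset.card (mand m) = m - 1 := by simp [mand]

/-- The multiset of parts corresponding to `α`. -/
noncomputable def sOf (α : Fin k → ℕ) : Multiset ℕ :=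
  mand m + ∑ i : Fin k, Multiset.replicate (α i) ((i : ℕ) + 1)

lemma count_sOf (α : Fin k → ℕ) (j : ℕ) :
    Multiset.count j (sOf m k α) =
      (if 1 ≤ j ∧ j < m then 1 else 0) +
      (if h : 1 ≤ j ∧ j ≤ k then α ⟨j - 1, by omega⟩ else 0) := by
  rw [sOf, Multiset.count_add, count_mand]
  congr 1
  rw [Multiset.count_sum']
  simp only [Multiset.count_replicate]
  split_ifs with h
  · rw [Finset.sum_eq_single (⟨j - 1, by omega⟩ : Fin k)]
    · simp [Nat.sub_add_cancel h.1]
    · intro i _ hne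
      rw [if_neg]
      intro hji
      exact hne (by apply Fin.ext; simp; omega)
    · simp
  · refine Finset.sum_eq_zero fun i _ => ?_
    rw [if_neg]
    intro hji
    have := i.isLt
    omega

lemma count_sOf_fin (α : Fin k → ℕ) (i : Fin k) :
    Multiset.count ((i : ℕ) + 1) (sOf m k α) =
      (if (i : ℕ) + 1 < m then 1 else 0) + α i := by
  rw [count_sOf]
  have hi := i.isLt
  rw [dif_pos ⟨by omega, by omega⟩]
  simp only [Nat.add_sub_cancel, Fin.eta]
  by_cases h : (i : ℕ) + 1 < m
  · rw [if_pos ⟨by omega, h⟩, if_pos h]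
  · rw [if_neg (by omega), if_neg h]

lemma sOf_injective : Function.Injective (sOf m k) := by
  intro α β h
  funext i
  have := congrArg (Multiset.count ((i : ℕ) + 1)) h
  rw [count_sOf_fin, count_sOf_fin] at this
  omega

lemma card_finset_sum {ι : Type*} (t : Finset ι) (f : ι → Multiset ℕ) :
    Multiset.card (∑ i ∈ t, f i) = ∑ i ∈ t, Multiset.card (f i) := by
  classical
  induction t using Finset.induction_on with
  | empty => simp
  | insert _ _ h ih => rw [Finset.sum_insert h, Finset.sum_insert h, Multiset.card_add, ih]

lemma card_sOf (α : Fin k → ℕ) :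
    Multiset.card (sOf m k α) = (m - 1) + ∑ i : Fin k, α i := by
  rw [sOf, Multiset.card_add, card_mand, card_finset_sum]
  simp

lemma sum_finset_sum {ι : Type*} (t : Finset ι) (f : ι → Multiset ℕ) :
    (∑ i ∈ t, f i).sum = ∑ i ∈ t, (f i).sum := by
  classical
  induction t using Finset.induction_on with
  | empty => simp
  | insert _ _ h ih => rw [Finset.sum_insert h, Finset.sum_insert h, Multiset.sum_add, ih]

lemma sum_sOf (α : Fin k → ℕ) :
    (sOf m k α).sum = m.choose 2 + ∑ i : Fin k, ((i : ℕ) + 1) * α i := by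
  rw [sOf, Multiset.sum_add, sum_mand, sum_finset_sum]
  simp [Multiset.sum_replicate, mul_comm]

lemma zero_not_mem_sOf (α : Fin k → ℕ) : 0 ∉ sOf m k α := by
  rw [← Multiset.count_eq_zero, count_sOf]
  simp

/-- Decomposition of a valid multiset of parts. -/
lemma exists_alpha (hm : 1 ≤ m) (S : Multiset ℕ) (h0 : 0 ∉ S)
    (hsum : S.sum = m.choose 2 + k)
    (hmem : ∀ j, 0 < j → j < m → j ∈ S) (hnm : m ∉ S) :
    ∃ α : Fin k → ℕ, (∑ i : Fin k, ((i : ℕ) + 1) * α i = k) ∧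
      (∀ i : Fin k, (i : ℕ) + 1 = m → α i = 0) ∧ S = sOf m k α := by
  have hle : mand m ≤ S := by
    rw [Multiset.le_iff_count]
    intro j
    rw [count_mand]
    split_ifs with h
    · exact (Multiset.count_pos).mpr (hmem j (by omega) h.2)
    · exact Nat.zero_le _
  obtain ⟨T, rfl⟩ := Multiset.le_iff_exists_add.mp hle
  have hTsum : T.sum = k := by
    have := sum_mand m
    rw [Multiset.sum_add] at hsum
    omega
  have hT0 : (0 : ℕ) ∉ T := fun h => h0 (Multiset.mem_add.mpr (Or.inr h))
  have hTm : m ∉ T := fun h => hnm (Multiset.mem_add.mpr (Or.inr h))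
  have hTbig : ∀ j ∈ T, j ≤ k := fun j hj => hTsum ▸ Multiset.le_sum_of_mem hj
  have hTeq : T = ∑ i : Fin k, Multiset.replicate (T.count ((i : ℕ) + 1)) ((i : ℕ) + 1) := by
    ext j
    rw [Multiset.count_sum']
    simp only [Multiset.count_replicate]
    by_cases hjk : 1 ≤ j ∧ j ≤ k
    · rw [Finset.sum_eq_single (⟨j - 1, by omega⟩ : Fin k)]
      · simp only [Fin.val_mk]
        rw [if_pos (by omega), Nat.sub_add_cancel hjk.1]
      · intro i _ hne
        rw [if_neg]
        intro hji
        exact hne (by apply Fin.ext; simp; omega)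
      · simp
    · rw [Finset.sum_eq_zero fun i _ => by
        rw [if_neg]; intro hji; have := i.isLt; omega]
      rcases Nat.eq_zero_or_pos j with rfl | hj
      · exact Multiset.count_eq_zero.mpr hT0
      · exact Multiset.count_eq_zero.mpr fun hc => hjk ⟨hj, hTbig j hc⟩
  refine ⟨fun i => T.count ((i : ℕ) + 1), ?_, ?_, ?_⟩
  · have h1 : T.sum = ∑ i : Fin k, ((i : ℕ) + 1) * T.count ((i : ℕ) + 1) := by
      conv_lhs => rw [hTeq]
      rw [sum_finset_sum]
      simp [Multiset.sum_replicate, mul_comm]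
    rw [← h1, hTsum]
  · intro i hi
    show Multiset.count ((i : ℕ) + 1) T = 0
    rw [hi]
    exact Multiset.count_eq_zero.mpr hTm
  · rw [sOf, ← hTeq]

lemma prod_count_sOf (hm : 1 ≤ m) (hk : 1 ≤ k) (α : Fin k → ℕ)
    (hc : ∀ i : Fin k, (i : ℕ) + 1 = m → α i = 0) :
    ∏ a ∈ (sOf m k α).toFinset, (Multiset.count a (sOf m k α)).factorial
      = ∏ i : Fin k, (if (i : ℕ) + 1 ≤ m - 1 then (α i + 1).factorial
          else if (i : ℕ) + 1 = m then 1 else (α i).factorial) := by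
  have hsub : (sOf m k α).toFinset ⊆ Finset.range (m + k) := by
    intro a ha
    rw [Multiset.mem_toFinset] at ha
    rw [Finset.mem_range]
    rcases Multiset.mem_add.mp ha with h | h
    · obtain ⟨x, hx, rfl⟩ := Multiset.mem_map.mp h
      rw [Multiset.mem_range] at hx
      omega
    · obtain ⟨i, _, hi⟩ := Multiset.mem_sum.mp h
      rw [Multiset.eq_of_mem_replicate hi]
      have := i.isLt
      omega
  rw [Finset.prod_subset hsub (fun a _ ha => by
      rw [Multiset.mem_toFinset, ← Multiset.count_pos, Nat.not_lt, Nat.le_zero] at ha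
      simp [ha])]
  rw [← Finset.prod_range_mul_prod_Ico _ (show k + 1 ≤ m + k by omega)]
  rw [Finset.prod_eq_one (f := fun j => (Multiset.count j (sOf m k α)).factorial)
    (s := Finset.Ico (k+1) (m+k)) (fun j hj => by
      rw [Finset.mem_Ico] at hj
      show (Multiset.count j (sOf m k α)).factorial = 1
      rw [count_sOf, dif_neg (by omega)]
      split_ifs <;> simp), mul_one]
  rw [Finset.prod_range_succ' (fun j => (Multiset.count j (sOf m k α)).factorial) k]
  rw [show Multiset.count 0 (sOf m k α) = 0 by rw [count_sOf]; simp, Nat.factorial_zero, mul_one]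
  rw [← Fin.prod_univ_eq_prod_range (fun j => (Multiset.count (j + 1) (sOf m k α)).factorial) k]
  refine Finset.prod_congr rfl fun i _ => ?_
  rw [count_sOf_fin]
  by_cases h1 : (i : ℕ) + 1 ≤ m - 1
  · rw [if_pos (by omega), if_pos h1, Nat.add_comm]
  · by_cases h2 : (i : ℕ) + 1 = m
    · rw [if_neg (by omega), if_neg h1, if_pos h2, hc i h2, Nat.factorial_zero]
    · rw [if_neg (by omega), if_neg h1, if_neg h2, Nat.zero_add]

end SOf


/-- for `m, k ≥ 1` and `n = m(m−1)/2 + k`, the number of compositions of `n`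
with mex `m` equals the sum, over all tuples `(α_1, …, α_k)` of nonnegative integers with
`α_1 + 2α_2 + ⋯ + kα_k = k` and `α_m = 0` (the latter applying only when `m ≤ k`), of
`(m − 1 + α_1 + ⋯ + α_k)! / ∏_{i=1}^k d_i`, where `d_i = (α_i + 1)!` for `i ≤ m − 1`,
`d_i = 1` for `i = m` and `d_i = α_i!` for `i ≥ m + 1`.
Here the tuple `(α_1, …, α_k)` is encoded as `α : Fin k → ℕ` with `α i` standing for
`α_{i+1}`, and the sum over all such tuples is expressed as a `finsum`. -/
theorem stmt_9 (m k : ℕ) (hm : 1 ≤ m) (hk : 1 ≤ k) (n : ℕ) (hn : n = m.choose 2 + k) :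
    ((Nat.card {c : Composition n // c.mex = m} : ℚ)) =
      ∑ᶠ (α : Fin k → ℕ)
        (_ : (∑ i : Fin k, ((i : ℕ) + 1) * α i = k) ∧
             (∀ i : Fin k, (i : ℕ) + 1 = m → α i = 0)),
        (Nat.factorial (m - 1 + ∑ i : Fin k, α i) : ℚ) /
          ∏ i : Fin k,
            (if (i : ℕ) + 1 ≤ m - 1 then (Nat.factorial (α i + 1) : ℚ)
             else if (i : ℕ) + 1 = m then 1
             else (Nat.factorial (α i) : ℚ)) := by
  classical
  set P : (Fin k → ℕ) → Prop := fun α =>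
    (∑ i : Fin k, ((i : ℕ) + 1) * α i = k) ∧
      (∀ i : Fin k, (i : ℕ) + 1 = m → α i = 0) with hP
  set A : Finset (Fin k → ℕ) :=
    (Fintype.piFinset fun _ : Fin k => Finset.range (k + 1)).filter P with hA
  have hmemA : ∀ α, α ∈ A ↔ P α := by
    intro α
    rw [hA, Finset.mem_filter, and_iff_right_iff_imp]
    intro hPα
    rw [Fintype.mem_piFinset]
    intro i
    rw [Finset.mem_range]
    have h1 := Finset.single_le_sum (f := fun i : Fin k => ((i : ℕ) + 1) * α i)
      (fun _ _ => Nat.zero_le (_ : ℕ)) (Finset.mem_univ i)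
    rw [hPα.1] at h1
    have h2 : α i ≤ ((i : ℕ) + 1) * α i := Nat.le_mul_of_pos_left _ (by omega)
    have h3 : ((i : ℕ) + 1) * α i ≤ k := h1
    omega
  set B : Finset (List ℕ) := A.biUnion (fun α => permsOf (sOf m k α)) with hB
  have hdisj : ∀ α ∈ A, ∀ β ∈ A, α ≠ β →
      Disjoint (permsOf (sOf m k α)) (permsOf (sOf m k β)) := by
    intro α _ β _ hne
    rw [Finset.disjoint_left]
    intro l hl hl'
    rw [mem_permsOf] at hl hl'
    exact hne (sOf_injective m k (hl.symm.trans hl'))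
  have hcard : Nat.card {c : Composition n // c.mex = m} = B.card := by
    rw [← Nat.card_eq_finsetCard]
    apply Nat.card_congr
    refine Equiv.ofBijective (fun c => ⟨c.1.blocks, ?_⟩) ⟨?_, ?_⟩
    · obtain ⟨h1, h2⟩ := (mex_eq_iff c.1 hm).mp c.2
      obtain ⟨α, hα1, hα2, hαS⟩ := exists_alpha m k hm (↑c.1.blocks)
        (fun h => by
          have := c.1.blocks_pos (Multiset.mem_coe.mp h)
          omega)
        (by rw [Multiset.sum_coe, c.1.blocks_sum, hn])
        (fun j hj hjm => Multiset.mem_coe.mpr (h2 j hj hjm))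
        (fun h => h1 (Multiset.mem_coe.mp h))
      exact Finset.mem_biUnion.mpr ⟨α, (hmemA α).mpr ⟨hα1, hα2⟩, mem_permsOf.mpr hαS⟩
    · intro c c' h
      exact Subtype.ext (Composition.ext (congrArg Subtype.val h))
    · rintro ⟨l, hl⟩
      obtain ⟨α, hαA, hαl⟩ := Finset.mem_biUnion.mp hl
      rw [mem_permsOf] at hαl
      obtain ⟨hP1, hP2⟩ := (hmemA α).mp hαA
      have hpos : ∀ x ∈ l, 0 < x := by
        intro x hx
        have hx' : x ∈ sOf m k α := hαl ▸ Multiset.mem_coe.mpr hx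
        rcases Nat.eq_zero_or_pos x with rfl | h
        · exact absurd hx' (zero_not_mem_sOf m k α)
        · exact h
      have hsum : l.sum = n := by
        have : (↑l : Multiset ℕ).sum = (sOf m k α).sum := by rw [hαl]
        rw [Multiset.sum_coe, sum_sOf, hP1] at this
        omega
      refine ⟨⟨⟨l, fun {x} hx => hpos x hx, hsum⟩, ?_⟩, rfl⟩
      rw [mex_eq_iff _ hm]
      constructor
      · intro hmem
        have : Multiset.count m (sOf m k α) = 0 := by
          rw [count_sOf]
          rw [if_neg (by omega)]
          split_ifs with h
          · rw [hP2 ⟨m - 1, by omega⟩ (by show m - 1 + 1 = m; omega)]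
          · rfl
        rw [← hαl, Multiset.coe_count] at this
        exact (List.count_pos_iff.mpr hmem).ne' (by simpa using this)
      · intro j hj hjm
        have : 0 < Multiset.count j (sOf m k α) := by
          rw [count_sOf, if_pos ⟨hj, hjm⟩]
          omega
        rw [← hαl, Multiset.coe_count] at this
        exact List.count_pos_iff.mp (by simpa using this)
  rw [hcard, hB, Finset.card_biUnion hdisj]
  rw [finsum_cond_eq_sum_of_cond_iff _ (fun {α} _ => (hmemA α).symm)]
  push_cast
  refine Finset.sum_congr rfl fun α hα => ?_
  obtain ⟨hP1, hP2⟩ := (hmemA α).mp hα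
  have hkey := card_permsOf_mul (sOf m k α)
  rw [prod_count_sOf m k hm hk α hP2, card_sOf] at hkey
  have hDcast : ((∏ i : Fin k, (if (i : ℕ) + 1 ≤ m - 1 then (α i + 1).factorial
      else if (i : ℕ) + 1 = m then 1 else (α i).factorial) : ℕ) : ℚ)
      = ∏ i : Fin k,
          (if (i : ℕ) + 1 ≤ m - 1 then ((α i + 1).factorial : ℚ)
           else if (i : ℕ) + 1 = m then 1
           else ((α i).factorial : ℚ)) := by
    push_cast
    refine Finset.prod_congr rfl fun i _ => ?_
    split_ifs <;> push_cast <;> ring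
  have hD0 : (∏ i : Fin k, (if (i : ℕ) + 1 ≤ m - 1 then ((α i + 1).factorial : ℚ)
      else if (i : ℕ) + 1 = m then 1 else ((α i).factorial : ℚ))) ≠ 0 := by
    apply Finset.prod_ne_zero_iff.mpr
    intro i _
    split_ifs <;> positivity
  rw [eq_div_iff hD0, ← hDcast]
  rw [mul_comm] at hkey
  exact_mod_cast hkey
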